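/- Every graph in the family 𝓕 is 2-γ'MB-critical; that is, for all integers m₁, m₂ ∈ {0} ∪ {2, 3, …} with m₁ ≤ m₂ and m₂ ≥ 2 and all t ≥ 1 (with t ≥ 2 when m₁ = 0), the graph F_{m₁,t,m₂} is 2-γ'MB-critical. -/

import Mathlib

/-- `D` is a dominating set of `G`: every vertex not in `D` has a neighbor in `D`. -/
def Dominating {V : Type*} (G : SimpleGraph V) (D : Set V) : Prop :=
  ∀ v, v ∉ D → ∃ d ∈ D, G.Adj d v

/-- Dominator wins the S-game on `G` within one move. -/
def WinsWithin1 {V : Type*} (G : SimpleGraph V) : Prop :=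
  ∀ s₁ : V, ∃ d₁, d₁ ≠ s₁ ∧ Dominating G {d₁}

/-- Dominator wins the S-game on `G` within two moves. -/
def WinsWithin2 {V : Type*} (G : SimpleGraph V) : Prop :=
  ∀ s₁ : V, ∃ d₁, d₁ ≠ s₁ ∧
    (Dominating G {d₁} ∨
      ∀ s₂, s₂ ∉ ({s₁, d₁} : Set V) →
        ∃ d₂, d₂ ∉ ({s₁, d₁, s₂} : Set V) ∧ Dominating G {d₁, d₂})

/-- `γ'MB(G) = 2`: Dominator wins the S-game within two moves but not within one. -/
def MBPrimeEqTwo {V : Type*} (G : SimpleGraph V) : Prop :=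
  WinsWithin2 G ∧ ¬ WinsWithin1 G

/-- `G` is `2`-`γ'MB`-critical: `γ'MB(G) = 2` and for every edge `e`, Dominator does not
win the S-game on `G - e` within two moves. -/
def Critical2 {V : Type*} (G : SimpleGraph V) : Prop :=
  MBPrimeEqTwo G ∧ ∀ u v : V, G.Adj u v → ¬ WinsWithin2 (G.deleteEdges {s(u, v)})

/-- The graph `H_m`, the join of `K₂` with the complement of `K_{m-2}`: the first two
vertices are adjacent to everything, the remaining vertices form an independent set.
(`H₀` is the null graph, `H₂ = K₂`.) -/
def HGraph (m : ℕ) : SimpleGraph (Fin m) :=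
  SimpleGraph.fromRel (fun u _ => u.val < 2)

/-- Vertex type of `F_{m₁,t,m₂}`: a copy of `H_{m₁}`, a copy of `H_{m₂}`, the independent
set `B` of `t` vertices, and the two vertices `v₁ = inr (inr 0)` and `v₂ = inr (inr 1)`. -/
abbrev FVert (m₁ t m₂ : ℕ) : Type := (Fin m₁ ⊕ Fin m₂) ⊕ (Fin t ⊕ Fin 2)

/-- The graph `F_{m₁,t,m₂}`: disjoint copies of `H_{m₁}` and `H_{m₂}`, an independent set
`B` of `t` vertices, and nonadjacent vertices `v₁, v₂`, where `v₁` is joined to `H_{m₁}`,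
`v₂` is joined to `H_{m₂}`, and both `v₁` and `v₂` are joined to all of `B`. -/
def FGraph (m₁ t m₂ : ℕ) : SimpleGraph (FVert m₁ t m₂) :=
  SimpleGraph.fromRel (fun u v =>
    match u, v with
    | .inl (.inl a), .inl (.inl _) => a.val < 2   -- inside H_{m₁}
    | .inl (.inr a), .inl (.inr _) => a.val < 2   -- inside H_{m₂}
    | .inr (.inr i), .inl (.inl _) => i = 0       -- v₁ to H_{m₁}
    | .inr (.inr i), .inl (.inr _) => i = 1       -- v₂ to H_{m₂}
    | .inr (.inr _), .inr (.inl _) => True        -- v₁, v₂ to B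
    | _, _ => False)


namespace FPrf
open SimpleGraph
variable {m₁ t m₂ : ℕ}

abbrev V1 : FVert m₁ t m₂ := .inr (.inr 0)
abbrev V2 : FVert m₁ t m₂ := .inr (.inr 1)
abbrev Hv1 (a : Fin m₁) : FVert m₁ t m₂ := .inl (.inl a)
abbrev Hv2 (a : Fin m₂) : FVert m₁ t m₂ := .inl (.inr a)
abbrev Bv (j : Fin t) : FVert m₁ t m₂ := .inr (.inl j)

/- ### adjacency API -/

lemma adj_to_B {y : FVert m₁ t m₂} {j : Fin t} (h : (FGraph m₁ t m₂).Adj y (Bv j)) :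
    y = V1 ∨ y = V2 := by
  rcases y with (a | a) | (j' | i)
  · simp [FGraph, SimpleGraph.fromRel_adj] at h
  · simp [FGraph, SimpleGraph.fromRel_adj] at h
  · simp [FGraph, SimpleGraph.fromRel_adj] at h
  · fin_cases i
    · left; rfl
    · right; rfl

lemma adj_to_Hv1 {y : FVert m₁ t m₂} {a : Fin m₁} (h : (FGraph m₁ t m₂).Adj y (Hv1 a)) :
    y = V1 ∨ ∃ c, y = Hv1 c := by
  rcases y with (c | c) | (j | i)
  · exact Or.inr ⟨c, rfl⟩
  · simp [FGraph, SimpleGraph.fromRel_adj] at h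
  · simp [FGraph, SimpleGraph.fromRel_adj] at h
  · fin_cases i
    · left; rfl
    · simp [FGraph, SimpleGraph.fromRel_adj] at h

lemma adj_to_Hv2 {y : FVert m₁ t m₂} {a : Fin m₂} (h : (FGraph m₁ t m₂).Adj y (Hv2 a)) :
    y = V2 ∨ ∃ c, y = Hv2 c := by
  rcases y with (c | c) | (j | i)
  · simp [FGraph, SimpleGraph.fromRel_adj] at h
  · exact Or.inr ⟨c, rfl⟩
  · simp [FGraph, SimpleGraph.fromRel_adj] at h
  · fin_cases i
    · simp [FGraph, SimpleGraph.fromRel_adj] at h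
    · left; rfl

lemma adj_to_V1 {y : FVert m₁ t m₂} (h : (FGraph m₁ t m₂).Adj y V1) :
    (∃ c, y = Hv1 c) ∨ ∃ j, y = Bv j := by
  rcases y with (c | c) | (j | i)
  · exact Or.inl ⟨c, rfl⟩
  · simp [FGraph, SimpleGraph.fromRel_adj] at h
  · exact Or.inr ⟨j, rfl⟩
  · fin_cases i <;> simp [FGraph, SimpleGraph.fromRel_adj] at h

lemma adj_to_V2 {y : FVert m₁ t m₂} (h : (FGraph m₁ t m₂).Adj y V2) :
    (∃ c, y = Hv2 c) ∨ ∃ j, y = Bv j := by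
  rcases y with (c | c) | (j | i)
  · simp [FGraph, SimpleGraph.fromRel_adj] at h
  · exact Or.inl ⟨c, rfl⟩
  · exact Or.inr ⟨j, rfl⟩
  · fin_cases i <;> simp [FGraph, SimpleGraph.fromRel_adj] at h

lemma adj_Hv1_Hv1 {a c : Fin m₁} (h : (FGraph m₁ t m₂).Adj (Hv1 a) (Hv1 c)) :
    a ≠ c ∧ (a.val < 2 ∨ c.val < 2) := by
  simpa [FGraph, SimpleGraph.fromRel_adj, or_comm] using h

lemma adj_Hv2_Hv2 {a c : Fin m₂} (h : (FGraph m₁ t m₂).Adj (Hv2 a) (Hv2 c)) :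
    a ≠ c ∧ (a.val < 2 ∨ c.val < 2) := by
  simpa [FGraph, SimpleGraph.fromRel_adj, or_comm] using h

/- positive adjacency -/

lemma adj_V1_Hv1 (a : Fin m₁) : (FGraph m₁ t m₂).Adj V1 (Hv1 a) := by
  simp [FGraph, SimpleGraph.fromRel_adj]

lemma adj_V2_Hv2 (a : Fin m₂) : (FGraph m₁ t m₂).Adj V2 (Hv2 a) := by
  simp [FGraph, SimpleGraph.fromRel_adj]

lemma adj_V1_B (j : Fin t) : (FGraph m₁ t m₂).Adj V1 (Bv j) := by
  simp [FGraph, SimpleGraph.fromRel_adj]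

lemma adj_V2_B (j : Fin t) : (FGraph m₁ t m₂).Adj V2 (Bv j) := by
  simp [FGraph, SimpleGraph.fromRel_adj]

lemma adj_Hv1_Hv1' {a c : Fin m₁} (hne : a ≠ c) (h2 : a.val < 2 ∨ c.val < 2) :
    (FGraph m₁ t m₂).Adj (Hv1 a) (Hv1 c) := by
  simp [FGraph, SimpleGraph.fromRel_adj, hne]
  omega

lemma adj_Hv2_Hv2' {a c : Fin m₂} (hne : a ≠ c) (h2 : a.val < 2 ∨ c.val < 2) :
    (FGraph m₁ t m₂).Adj (Hv2 a) (Hv2 c) := by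
  simp [FGraph, SimpleGraph.fromRel_adj, hne]
  omega

lemma not_adj_V1_V2 : ¬ (FGraph m₁ t m₂).Adj V1 V2 := by
  simp [FGraph, SimpleGraph.fromRel_adj]

end FPrf

namespace FPrf
open SimpleGraph
variable {m₁ t m₂ : ℕ}

lemma dom_mono {V : Type*} {G : SimpleGraph V} {s : Set (Sym2 V)} {D : Set V}
    (h : Dominating (G.deleteEdges s) D) : Dominating G D := by
  intro v hv
  obtain ⟨d, hd, ha⟩ := h v hv
  exact ⟨d, hd, ((SimpleGraph.deleteEdges_adj).1 ha).1⟩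

lemma mem_pair_iff {α : Type*} {x a b : α} :
    x ∈ ({a, b} : Set α) ↔ x = a ∨ x = b := by simp

lemma not_dom_single (hm₂ : 2 ≤ m₂) (d : FVert m₁ t m₂) :
    ¬ Dominating (FGraph m₁ t m₂) {d} := by
  intro h
  by_cases hd : d = V1
  · subst hd
    obtain ⟨e, he, ha⟩ := h V2 (by simp)
    rw [Set.mem_singleton_iff] at he
    rw [he] at ha
    exact not_adj_V1_V2 ha
  · obtain ⟨e, he, ha⟩ := h V1 (by simp [Ne.symm hd])
    rw [Set.mem_singleton_iff] at he
    rw [he] at ha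
    -- d ∈ H₁ ∪ B, so d is not the single dominator of Hv2 0
    have h0 : (Hv2 ⟨0, by omega⟩ : FVert m₁ t m₂) ∉ ({d} : Set _) := by
      rcases adj_to_V1 ha with ⟨c, rfl⟩ | ⟨j, rfl⟩ <;> simp
    obtain ⟨e, he, ha2⟩ := h _ h0
    rw [Set.mem_singleton_iff] at he
    rw [he] at ha2
    rcases adj_to_Hv2 ha2 with h' | ⟨c, h'⟩ <;>
      rcases adj_to_V1 ha with ⟨c', hc⟩ | ⟨j, hc⟩ <;> subst h' <;> simp at hc

lemma not_dom_pair (hm₁ : m₁ = 0 ∨ 2 ≤ m₁) (hm₂ : 2 ≤ m₂) (ht : 1 ≤ t)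
    (ht₀ : m₁ = 0 → 2 ≤ t) {d₁ d₂ : FVert m₁ t m₂}
    (h1 : d₁ ≠ V1) (h2 : d₂ ≠ V1) (h3 : d₁ ≠ V2) (h4 : d₂ ≠ V2) :
    ¬ Dominating (FGraph m₁ t m₂) {d₁, d₂} := by
  intro h
  have hb0 : (Bv ⟨0, by omega⟩ : FVert m₁ t m₂) ∈ ({d₁, d₂} : Set _) := by
    by_contra hb
    obtain ⟨e, he, ha⟩ := h _ hb
    rcases adj_to_B ha with rfl | rfl <;> rw [mem_pair_iff] at he <;>
      rcases he with he | he <;> simp_all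
  have key : ∀ x : FVert m₁ t m₂, x ≠ V1 → x ≠ V2 →
      ¬ Dominating (FGraph m₁ t m₂) {Bv ⟨0, by omega⟩, x} := by
    intro x hx1 hx2 hdom
    have hx : ∃ a : Fin m₂, x = Hv2 a := by
      by_cases hxe : x = Hv2 ⟨0, by omega⟩
      · exact ⟨_, hxe⟩
      · obtain ⟨e, he, ha⟩ := hdom (Hv2 ⟨0, by omega⟩) (by
          rw [mem_pair_iff]; push_neg
          exact ⟨by simp, fun hh => hxe hh.symm⟩)
        rw [mem_pair_iff] at he
        rcases he with rfl | rfl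
        · rcases adj_to_Hv2 ha with h' | ⟨c, h'⟩ <;> simp at h'
        · rcases adj_to_Hv2 ha with rfl | ⟨c, rfl⟩
          · exact absurd rfl hx2
          · exact ⟨c, rfl⟩
    obtain ⟨a, rfl⟩ := hx
    rcases hm₁ with hz | hp
    · have ht2 := ht₀ hz
      obtain ⟨e, he, ha⟩ := hdom (Bv ⟨1, by omega⟩) (by
        rw [mem_pair_iff]; push_neg
        constructor <;> simp [Fin.ext_iff])
      rw [mem_pair_iff] at he
      rcases he with rfl | rfl <;> rcases adj_to_B ha with h' | h' <;> simp at h'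
    · obtain ⟨e, he, ha⟩ := hdom (Hv1 ⟨0, by omega⟩) (by
        rw [mem_pair_iff]; push_neg; constructor <;> simp)
      rw [mem_pair_iff] at he
      rcases he with rfl | rfl <;>
        rcases adj_to_Hv1 ha with h' | ⟨c, h'⟩ <;> simp at h'
  rw [mem_pair_iff] at hb0
  rcases hb0 with hb | hb
  · rw [hb] at key
    exact key d₂ h2 h4 h
  · rw [Set.pair_comm] at h
    rw [hb] at key
    exact key d₁ h1 h3 h

end FPrf

namespace FPrf
open SimpleGraph
variable {m₁ t m₂ : ℕ}

lemma dom_P0 : Dominating (FGraph m₁ t m₂) {V1, V2} := by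
  intro w hw
  rcases w with (a | a) | (j | i)
  · exact ⟨V1, by simp, adj_V1_Hv1 a⟩
  · exact ⟨V2, by simp, adj_V2_Hv2 a⟩
  · exact ⟨V1, by simp, adj_V1_B j⟩
  · rw [mem_pair_iff] at hw; push_neg at hw
    fin_cases i
    · exact absurd rfl hw.1
    · exact absurd rfl hw.2

lemma dom_A {k : Fin m₂} (hk : k.val < 2) : Dominating (FGraph m₁ t m₂) {V1, Hv2 k} := by
  intro w hw
  rw [mem_pair_iff] at hw; push_neg at hw
  rcases w with (a | a) | (j | i)
  · exact ⟨V1, by simp, adj_V1_Hv1 a⟩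
  · refine ⟨Hv2 k, by simp, adj_Hv2_Hv2' ?_ (Or.inl hk)⟩
    intro hh; exact hw.2 (by rw [hh])
  · exact ⟨V1, by simp, adj_V1_B j⟩
  · fin_cases i
    · exact absurd rfl hw.1
    · exact ⟨Hv2 k, by simp, (adj_V2_Hv2 k).symm⟩

lemma dom_B {k : Fin m₁} (hk : k.val < 2) : Dominating (FGraph m₁ t m₂) {V2, Hv1 k} := by
  intro w hw
  rw [mem_pair_iff] at hw; push_neg at hw
  rcases w with (a | a) | (j | i)
  · refine ⟨Hv1 k, by simp, adj_Hv1_Hv1' ?_ (Or.inl hk)⟩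
    intro hh; exact hw.2 (by rw [hh])
  · exact ⟨V2, by simp, adj_V2_Hv2 a⟩
  · exact ⟨V2, by simp, adj_V2_B j⟩
  · fin_cases i
    · exact ⟨Hv1 k, by simp, (adj_V1_Hv1 k).symm⟩
    · exact absurd rfl hw.1

lemma dom_C (hz : m₁ = 0) (j : Fin t) : Dominating (FGraph m₁ t m₂) {V2, Bv j} := by
  intro w hw
  rcases w with (a | a) | (j' | i)
  · exact absurd a.2 (by omega)
  · exact ⟨V2, by simp, adj_V2_Hv2 a⟩
  · exact ⟨V2, by simp, adj_V2_B j'⟩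
  · rw [mem_pair_iff] at hw; push_neg at hw
    fin_cases i
    · exact ⟨Bv j, by simp, (adj_V1_B j).symm⟩
    · exact absurd rfl hw.1

lemma wins2 (hm₁ : m₁ = 0 ∨ 2 ≤ m₁) (hm₂ : 2 ≤ m₂) (ht₀ : m₁ = 0 → 2 ≤ t) :
    WinsWithin2 (FGraph m₁ t m₂) := by
  intro s₁
  by_cases h : s₁ = V2
  · subst h
    refine ⟨V1, by simp, Or.inr fun s₂ hs₂ => ?_⟩
    rw [mem_pair_iff] at hs₂; push_neg at hs₂
    by_cases hs : s₂ = Hv2 ⟨0, by omega⟩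
    · refine ⟨Hv2 ⟨1, by omega⟩, ?_, dom_A (by simp)⟩
      simp only [Set.mem_insert_iff, Set.mem_singleton_iff]
      push_neg
      refine ⟨by simp, by simp, ?_⟩
      rw [hs]; simp
    · refine ⟨Hv2 ⟨0, by omega⟩, ?_, dom_A (by simp)⟩
      simp only [Set.mem_insert_iff, Set.mem_singleton_iff]
      push_neg
      exact ⟨by simp, by simp, fun hh => hs (hh ▸ rfl)⟩
  · refine ⟨V2, fun hh => h hh.symm, Or.inr fun s₂ hs₂ => ?_⟩
    rw [mem_pair_iff] at hs₂; push_neg at hs₂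
    rcases hm₁ with hz | hp
    · -- m₁ = 0 : options V1, Bv 0, Bv 1
      have ht2 := ht₀ hz
      by_cases c1 : V1 = s₁ ∨ (V1 : FVert m₁ t m₂) = s₂
      · by_cases c2 : Bv ⟨0, by omega⟩ = s₁ ∨ (Bv ⟨0, by omega⟩ : FVert m₁ t m₂) = s₂
        · refine ⟨Bv ⟨1, by omega⟩, ?_, dom_C hz _⟩
          simp only [Set.mem_insert_iff, Set.mem_singleton_iff]
          push_neg
          refine ⟨?_, by simp, ?_⟩ <;>
            (intro hh; rcases c1 with c1 | c1 <;> rcases c2 with c2 | c2 <;>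
              subst c1 <;> (try subst c2) <;> simp_all [Fin.ext_iff])
        · push_neg at c2
          refine ⟨Bv ⟨0, by omega⟩, ?_, dom_C hz _⟩
          simp only [Set.mem_insert_iff, Set.mem_singleton_iff]
          push_neg
          exact ⟨c2.1, by simp, c2.2⟩
      · push_neg at c1
        refine ⟨V1, ?_, by rw [Set.pair_comm]; exact dom_P0⟩
        simp only [Set.mem_insert_iff, Set.mem_singleton_iff]
        push_neg
        exact ⟨c1.1, by simp, c1.2⟩
    · -- m₁ ≥ 2 : options V1, Hv1 0, Hv1 1
      by_cases c1 : V1 = s₁ ∨ (V1 : FVert m₁ t m₂) = s₂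
      · by_cases c2 : Hv1 ⟨0, by omega⟩ = s₁ ∨ (Hv1 ⟨0, by omega⟩ : FVert m₁ t m₂) = s₂
        · refine ⟨Hv1 ⟨1, by omega⟩, ?_, dom_B (by simp)⟩
          simp only [Set.mem_insert_iff, Set.mem_singleton_iff]
          push_neg
          refine ⟨?_, by simp, ?_⟩ <;>
            (intro hh; rcases c1 with c1 | c1 <;> rcases c2 with c2 | c2 <;>
              subst c1 <;> (try subst c2) <;> simp_all [Fin.ext_iff])
        · push_neg at c2
          refine ⟨Hv1 ⟨0, by omega⟩, ?_, dom_B (by simp)⟩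
          simp only [Set.mem_insert_iff, Set.mem_singleton_iff]
          push_neg
          exact ⟨c2.1, by simp, c2.2⟩
      · push_neg at c1
        refine ⟨V1, ?_, by rw [Set.pair_comm]; exact dom_P0⟩
        simp only [Set.mem_insert_iff, Set.mem_singleton_iff]
        push_neg
        exact ⟨c1.1, by simp, c1.2⟩

lemma notwins1 (hm₂ : 2 ≤ m₂) : ¬ WinsWithin1 (FGraph m₁ t m₂) := by
  intro h
  obtain ⟨d₁, _, hdom⟩ := h V1
  exact not_dom_single hm₂ d₁ hdom

end FPrf

namespace FPrf
open SimpleGraph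
variable {m₁ t m₂ : ℕ}

lemma del_adj {e : Sym2 (FVert m₁ t m₂)} {x y : FVert m₁ t m₂}
    (h : ((FGraph m₁ t m₂).deleteEdges {e}).Adj x y) :
    (FGraph m₁ t m₂).Adj x y ∧ s(x, y) ≠ e := by
  simpa [SimpleGraph.deleteEdges_adj] using h

lemma v2_partner {s : Set (Sym2 (FVert m₁ t m₂))} {x : FVert m₁ t m₂}
    (hD : Dominating ((FGraph m₁ t m₂).deleteEdges s) {V2, x}) :
    (x = V1 ∨ ((FGraph m₁ t m₂).deleteEdges s).Adj x V1) ∧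
    ∀ a : Fin m₁, x = Hv1 a ∨ ((FGraph m₁ t m₂).deleteEdges s).Adj x (Hv1 a) := by
  constructor
  · by_cases hx : x = V1
    · exact Or.inl hx
    · obtain ⟨d, hd, ha⟩ := hD V1 (by
        rw [mem_pair_iff]; push_neg; exact ⟨by simp, fun hh => hx hh.symm⟩)
      rw [mem_pair_iff] at hd
      rcases hd with rfl | rfl
      · exact absurd ((SimpleGraph.deleteEdges_adj).1 ha).1.symm not_adj_V1_V2
      · exact Or.inr ha
  · intro a
    by_cases hx : x = Hv1 a
    · exact Or.inl hx
    · obtain ⟨d, hd, ha⟩ := hD (Hv1 a) (by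
        rw [mem_pair_iff]; push_neg; exact ⟨by simp, fun hh => hx hh.symm⟩)
      rw [mem_pair_iff] at hd
      rcases hd with rfl | rfl
      · rcases adj_to_Hv1 ((SimpleGraph.deleteEdges_adj).1 ha).1 with h' | ⟨c, h'⟩ <;>
          simp at h'
      · exact Or.inr ha

lemma v1_partner {s : Set (Sym2 (FVert m₁ t m₂))} {x : FVert m₁ t m₂}
    (hD : Dominating ((FGraph m₁ t m₂).deleteEdges s) {V1, x}) :
    (x = V2 ∨ ((FGraph m₁ t m₂).deleteEdges s).Adj x V2) ∧
    ∀ a : Fin m₂, x = Hv2 a ∨ ((FGraph m₁ t m₂).deleteEdges s).Adj x (Hv2 a) := by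
  constructor
  · by_cases hx : x = V2
    · exact Or.inl hx
    · obtain ⟨d, hd, ha⟩ := hD V2 (by
        rw [mem_pair_iff]; push_neg; exact ⟨by simp, fun hh => hx hh.symm⟩)
      rw [mem_pair_iff] at hd
      rcases hd with rfl | rfl
      · exact absurd ((SimpleGraph.deleteEdges_adj).1 ha).1 not_adj_V1_V2
      · exact Or.inr ha
  · intro a
    by_cases hx : x = Hv2 a
    · exact Or.inl hx
    · obtain ⟨d, hd, ha⟩ := hD (Hv2 a) (by
        rw [mem_pair_iff]; push_neg; exact ⟨by simp, fun hh => hx hh.symm⟩)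
      rw [mem_pair_iff] at hd
      rcases hd with rfl | rfl
      · rcases adj_to_Hv2 ((SimpleGraph.deleteEdges_adj).1 ha).1 with h' | ⟨c, h'⟩ <;>
          simp at h'
      · exact Or.inr ha

end FPrf

namespace FPrf
open SimpleGraph
variable {m₁ t m₂ : ℕ}

lemma claim_E3 (k : Fin m₁) {x : FVert m₁ t m₂} (hx : x ≠ V2) :
    ¬ Dominating ((FGraph m₁ t m₂).deleteEdges {s(V1, Hv1 k)}) {V1, x} := by
  intro hdom
  obtain ⟨d, hd, ha⟩ := hdom V2 (by
    rw [mem_pair_iff]; push_neg; exact ⟨by simp, fun hh => hx hh.symm⟩)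
  rw [mem_pair_iff] at hd
  rcases hd with rfl | rfl
  · exact not_adj_V1_V2 (del_adj ha).1
  · -- x is adjacent to V2, so x ∈ H₂ ∪ B; then Hv1 k is undominated
    have hxs := adj_to_V2 (del_adj ha).1
    obtain ⟨d, hd, ha2⟩ := hdom (Hv1 k) (by
      rw [mem_pair_iff]; push_neg
      refine ⟨by simp, ?_⟩
      rcases hxs with ⟨c, rfl⟩ | ⟨j, rfl⟩ <;> simp)
    rw [mem_pair_iff] at hd
    rcases hd with rfl | rfl
    · exact (del_adj ha2).2 rfl
    · have := (del_adj ha2).1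
      rcases hxs with ⟨c, rfl⟩ | ⟨j, rfl⟩ <;>
        rcases adj_to_Hv1 this with h' | ⟨c', h'⟩ <;> simp at h'

lemma claim_E3' (k : Fin m₂) {x : FVert m₁ t m₂} (hx : x ≠ V1) :
    ¬ Dominating ((FGraph m₁ t m₂).deleteEdges {s(V2, Hv2 k)}) {V2, x} := by
  intro hdom
  obtain ⟨d, hd, ha⟩ := hdom V1 (by
    rw [mem_pair_iff]; push_neg; exact ⟨by simp, fun hh => hx hh.symm⟩)
  rw [mem_pair_iff] at hd
  rcases hd with rfl | rfl
  · exact not_adj_V1_V2 (del_adj ha).1.symm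
  · have hxs := adj_to_V1 (del_adj ha).1
    obtain ⟨d, hd, ha2⟩ := hdom (Hv2 k) (by
      rw [mem_pair_iff]; push_neg
      refine ⟨by simp, ?_⟩
      rcases hxs with ⟨c, rfl⟩ | ⟨j, rfl⟩ <;> simp)
    rw [mem_pair_iff] at hd
    rcases hd with rfl | rfl
    · exact (del_adj ha2).2 rfl
    · have := (del_adj ha2).1
      rcases hxs with ⟨c, rfl⟩ | ⟨j, rfl⟩ <;>
        rcases adj_to_Hv2 this with h' | ⟨c', h'⟩ <;> simp at h'

lemma claim_E4 (hm₂ : 2 ≤ m₂) (j : Fin t) {x : FVert m₁ t m₂} (hx : x ≠ V2) :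
    ¬ Dominating ((FGraph m₁ t m₂).deleteEdges {s(V1, Bv j)}) {V1, x} := by
  intro hdom
  by_cases hxb : x = Bv j
  · subst hxb
    obtain ⟨d, hd, ha⟩ := hdom (Hv2 ⟨0, by omega⟩) (by
      rw [mem_pair_iff]; push_neg; constructor <;> simp)
    rw [mem_pair_iff] at hd
    rcases hd with rfl | rfl <;>
      rcases adj_to_Hv2 (del_adj ha).1 with h' | ⟨c', h'⟩ <;> simp at h'
  · obtain ⟨d, hd, ha⟩ := hdom (Bv j) (by
      rw [mem_pair_iff]; push_neg
      exact ⟨by simp, fun hh => hxb hh.symm⟩)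
    rw [mem_pair_iff] at hd
    rcases hd with rfl | rfl
    · exact (del_adj ha).2 rfl
    · rcases adj_to_B (del_adj ha).1 with rfl | rfl
      · exact (del_adj ha).2 rfl
      · exact hx rfl

lemma claim_E4' (j : Fin t) {x : FVert m₁ t m₂} (hx1 : x ≠ V1) (hx2 : x ≠ V2)
    (hx3 : x ≠ Bv j) :
    ¬ Dominating ((FGraph m₁ t m₂).deleteEdges {s(V2, Bv j)}) {V2, x} := by
  intro hdom
  obtain ⟨d, hd, ha⟩ := hdom (Bv j) (by
    rw [mem_pair_iff]; push_neg
    exact ⟨by simp, fun hh => hx3 hh.symm⟩)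
  rw [mem_pair_iff] at hd
  rcases hd with rfl | rfl
  · exact (del_adj ha).2 rfl
  · rcases adj_to_B (del_adj ha).1 with rfl | rfl
    · exact hx1 rfl
    · exact hx2 rfl

lemma refute_E3 (hm₁ : m₁ = 0 ∨ 2 ≤ m₁) (hm₂ : 2 ≤ m₂) (ht : 1 ≤ t)
    (ht₀ : m₁ = 0 → 2 ≤ t) (k : Fin m₁) :
    ¬ WinsWithin2 ((FGraph m₁ t m₂).deleteEdges {s(V1, Hv1 k)}) := by
  intro hw
  obtain ⟨d₁, hd₁, hcase⟩ := hw V2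
  rcases hcase with hdom | hstrat
  · exact not_dom_single hm₂ d₁ (dom_mono hdom)
  · by_cases hdv : d₁ = V1
    · subst hdv
      obtain ⟨d₂, hd₂, hdom⟩ := hstrat (Hv2 ⟨0, by omega⟩) (by
        rw [mem_pair_iff]; push_neg; constructor <;> simp)
      simp only [Set.mem_insert_iff, Set.mem_singleton_iff] at hd₂
      push_neg at hd₂
      exact claim_E3 k hd₂.1 hdom
    · obtain ⟨d₂, hd₂, hdom⟩ := hstrat V1 (by
        rw [mem_pair_iff]; push_neg
        exact ⟨by simp, fun hh => hdv hh.symm⟩)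
      simp only [Set.mem_insert_iff, Set.mem_singleton_iff] at hd₂
      push_neg at hd₂
      exact not_dom_pair hm₁ hm₂ ht ht₀ hdv hd₂.2.2 hd₁ hd₂.1 (dom_mono hdom)

lemma refute_E4 (hm₁ : m₁ = 0 ∨ 2 ≤ m₁) (hm₂ : 2 ≤ m₂) (ht : 1 ≤ t)
    (ht₀ : m₁ = 0 → 2 ≤ t) (j : Fin t) :
    ¬ WinsWithin2 ((FGraph m₁ t m₂).deleteEdges {s(V1, Bv j)}) := by
  intro hw
  obtain ⟨d₁, hd₁, hcase⟩ := hw V2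
  rcases hcase with hdom | hstrat
  · exact not_dom_single hm₂ d₁ (dom_mono hdom)
  · by_cases hdv : d₁ = V1
    · subst hdv
      obtain ⟨d₂, hd₂, hdom⟩ := hstrat (Hv2 ⟨0, by omega⟩) (by
        rw [mem_pair_iff]; push_neg; constructor <;> simp)
      simp only [Set.mem_insert_iff, Set.mem_singleton_iff] at hd₂
      push_neg at hd₂
      exact claim_E4 hm₂ j hd₂.1 hdom
    · obtain ⟨d₂, hd₂, hdom⟩ := hstrat V1 (by
        rw [mem_pair_iff]; push_neg
        exact ⟨by simp, fun hh => hdv hh.symm⟩)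
      simp only [Set.mem_insert_iff, Set.mem_singleton_iff] at hd₂
      push_neg at hd₂
      exact not_dom_pair hm₁ hm₂ ht ht₀ hdv hd₂.2.2 hd₁ hd₂.1 (dom_mono hdom)

lemma refute_E3' (hm₁ : m₁ = 0 ∨ 2 ≤ m₁) (hm₂ : 2 ≤ m₂) (ht : 1 ≤ t)
    (ht₀ : m₁ = 0 → 2 ≤ t) (k : Fin m₂) :
    ¬ WinsWithin2 ((FGraph m₁ t m₂).deleteEdges {s(V2, Hv2 k)}) := by
  intro hw
  obtain ⟨d₁, hd₁, hcase⟩ := hw V1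
  rcases hcase with hdom | hstrat
  · exact not_dom_single hm₂ d₁ (dom_mono hdom)
  · by_cases hdv : d₁ = V2
    · subst hdv
      obtain ⟨d₂, hd₂, hdom⟩ := hstrat (Bv ⟨0, by omega⟩) (by
        rw [mem_pair_iff]; push_neg; constructor <;> simp)
      simp only [Set.mem_insert_iff, Set.mem_singleton_iff] at hd₂
      push_neg at hd₂
      exact claim_E3' k hd₂.1 hdom
    · obtain ⟨d₂, hd₂, hdom⟩ := hstrat V2 (by
        rw [mem_pair_iff]; push_neg
        exact ⟨by simp, fun hh => hdv hh.symm⟩)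
      simp only [Set.mem_insert_iff, Set.mem_singleton_iff] at hd₂
      push_neg at hd₂
      exact not_dom_pair hm₁ hm₂ ht ht₀ hd₁ hd₂.1 hdv hd₂.2.2 (dom_mono hdom)

lemma refute_E4' (hm₁ : m₁ = 0 ∨ 2 ≤ m₁) (hm₂ : 2 ≤ m₂) (ht : 1 ≤ t)
    (ht₀ : m₁ = 0 → 2 ≤ t) (j : Fin t) :
    ¬ WinsWithin2 ((FGraph m₁ t m₂).deleteEdges {s(V2, Bv j)}) := by
  intro hw
  obtain ⟨d₁, hd₁, hcase⟩ := hw V1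
  rcases hcase with hdom | hstrat
  · exact not_dom_single hm₂ d₁ (dom_mono hdom)
  · by_cases hdv : d₁ = V2
    · subst hdv
      obtain ⟨d₂, hd₂, hdom⟩ := hstrat (Bv j) (by
        rw [mem_pair_iff]; push_neg; constructor <;> simp)
      simp only [Set.mem_insert_iff, Set.mem_singleton_iff] at hd₂
      push_neg at hd₂
      exact claim_E4' j hd₂.1 hd₂.2.1 hd₂.2.2 hdom
    · obtain ⟨d₂, hd₂, hdom⟩ := hstrat V2 (by
        rw [mem_pair_iff]; push_neg
        exact ⟨by simp, fun hh => hdv hh.symm⟩)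
      simp only [Set.mem_insert_iff, Set.mem_singleton_iff] at hd₂
      push_neg at hd₂
      exact not_dom_pair hm₁ hm₂ ht ht₀ hd₁ hd₂.1 hdv hd₂.2.2 (dom_mono hdom)

end FPrf

namespace FPrf
open SimpleGraph
variable {m₁ t m₂ : ℕ}

lemma hv1_inj {a c : Fin m₁} (h : (Hv1 a : FVert m₁ t m₂) = Hv1 c) : a = c := by
  simpa using h

lemma hv2_inj {a c : Fin m₂} (h : (Hv2 a : FVert m₁ t m₂) = Hv2 c) : a = c := by
  simpa using h

lemma refute_E12 (hm₁ : m₁ = 0 ∨ 2 ≤ m₁) (hm₂ : 2 ≤ m₂) (ht : 1 ≤ t)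
    (ht₀ : m₁ = 0 → 2 ≤ t) (a c : Fin m₁) (ha2 : a.val < 2) (hac : a ≠ c) :
    ¬ WinsWithin2 ((FGraph m₁ t m₂).deleteEdges {s(Hv1 a, Hv1 c)}) := by
  have hval : a.val ≠ c.val := fun hh => hac (Fin.ext hh)
  intro hw
  obtain ⟨d₁, hd₁, hcase⟩ := hw V1
  rcases hcase with hdom | hstrat
  · exact not_dom_single hm₂ d₁ (dom_mono hdom)
  · by_cases hdv : d₁ = V2
    · subst hdv
      have core : ∀ s₂ : FVert m₁ t m₂, s₂ ∉ ({V1, V2} : Set _) →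
          (∀ x : Fin m₁, Hv1 x ≠ s₂ →
            (∀ y : Fin m₁, (Hv1 x : FVert m₁ t m₂) = Hv1 y ∨
              ((FGraph m₁ t m₂).deleteEdges {s(Hv1 a, Hv1 c)}).Adj (Hv1 x) (Hv1 y)) →
            False) → False := by
        intro s₂ hs₂ hH
        obtain ⟨d₂, hd₂, hdom⟩ := hstrat s₂ hs₂
        simp only [Set.mem_insert_iff, Set.mem_singleton_iff] at hd₂
        push_neg at hd₂
        have hp := (v2_partner hdom).2
        rcases d₂ with (x | x) | (j | i)
        · exact hH x hd₂.2.2 hp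
        · rcases hp a with heq | hadj
          · simp at heq
          · rcases adj_to_Hv1 (del_adj hadj).1 with h' | ⟨c', h'⟩ <;> simp at h'
        · rcases hp a with heq | hadj
          · simp at heq
          · rcases adj_to_Hv1 (del_adj hadj).1 with h' | ⟨c', h'⟩ <;> simp at h'
        · fin_cases i
          · exact hd₂.1 rfl
          · exact hd₂.2.1 rfl
      have htop : c.val < 2 → ∀ x : Fin m₁, x.val < 2 →
          (∀ y : Fin m₁, (Hv1 x : FVert m₁ t m₂) = Hv1 y ∨
            ((FGraph m₁ t m₂).deleteEdges {s(Hv1 a, Hv1 c)}).Adj (Hv1 x) (Hv1 y)) →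
          False := by
        intro hcl x hx2 hp
        have hxac : x = a ∨ x = c := by
          have h' : x.val = a.val ∨ x.val = c.val := by omega
          rcases h' with h' | h'
          · exact Or.inl (Fin.ext h')
          · exact Or.inr (Fin.ext h')
        rcases hxac with rfl | rfl
        · rcases hp c with heq | hadj
          · exact hac (hv1_inj heq)
          · exact (del_adj hadj).2 rfl
        · rcases hp a with heq | hadj
          · exact hac (hv1_inj heq).symm
          · exact (del_adj hadj).2 Sym2.eq_swap
      by_cases hcl : c.val < 2
      · by_cases h3 : 3 ≤ m₁
        · set f2 : Fin m₁ := ⟨2, by omega⟩ with hf2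
          have h2v : (f2 : ℕ) = 2 := rfl
          refine core (Hv1 f2) (by rw [mem_pair_iff]; push_neg; constructor <;> simp) ?_
          intro x hxs hp
          by_cases hx2 : x.val < 2
          · exact htop hcl x hx2 hp
          · by_cases hx22 : x.val = 2
            · exact hxs (congrArg _ (Fin.ext (by omega)))
            · rcases hp f2 with heq | hadj
              · have := congrArg Fin.val (hv1_inj heq)
                omega
              · have h' := adj_Hv1_Hv1 (del_adj hadj).1
                rcases h'.2 with h'' | h'' <;> omega
        · refine core (Bv ⟨0, by omega⟩) (by rw [mem_pair_iff]; push_neg; constructor <;> simp) ?_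
          intro x hxs hp
          by_cases hx2 : x.val < 2
          · exact htop hcl x hx2 hp
          · have := x.2
            omega
      · -- a top, c low
        set ot : Fin m₁ := ⟨1 - a.val, by omega⟩ with hot
        have hotv : (ot : ℕ) = 1 - a.val := rfl
        refine core (Hv1 ot) (by rw [mem_pair_iff]; push_neg; constructor <;> simp) ?_
        intro x hxs hp
        by_cases hx2 : x.val < 2
        · by_cases hxa : x = a
          · subst hxa
            rcases hp c with heq | hadj
            · exact hac (hv1_inj heq)
            · exact (del_adj hadj).2 rfl
          · have hxv : x.val ≠ a.val := fun hh => hxa (Fin.ext hh)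
            exact hxs (congrArg _ (Fin.ext (by omega)))
        · by_cases hxc : x = c
          · subst hxc
            rcases hp a with heq | hadj
            · exact hac (hv1_inj heq).symm
            · exact (del_adj hadj).2 Sym2.eq_swap
          · rcases hp c with heq | hadj
            · exact hxc (hv1_inj heq)
            · have h' := adj_Hv1_Hv1 (del_adj hadj).1
              rcases h'.2 with h'' | h'' <;> omega
    · obtain ⟨d₂, hd₂, hdom⟩ := hstrat V2 (by
        rw [mem_pair_iff]; push_neg
        exact ⟨by simp, fun hh => hdv hh.symm⟩)
      simp only [Set.mem_insert_iff, Set.mem_singleton_iff] at hd₂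
      push_neg at hd₂
      exact not_dom_pair hm₁ hm₂ ht ht₀ hd₁ hd₂.1 hdv hd₂.2.2 (dom_mono hdom)

lemma refute_E12' (hm₁ : m₁ = 0 ∨ 2 ≤ m₁) (hm₂ : 2 ≤ m₂) (ht : 1 ≤ t)
    (ht₀ : m₁ = 0 → 2 ≤ t) (a c : Fin m₂) (ha2 : a.val < 2) (hac : a ≠ c) :
    ¬ WinsWithin2 ((FGraph m₁ t m₂).deleteEdges {s(Hv2 a, Hv2 c)}) := by
  have hval : a.val ≠ c.val := fun hh => hac (Fin.ext hh)
  intro hw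
  obtain ⟨d₁, hd₁, hcase⟩ := hw V2
  rcases hcase with hdom | hstrat
  · exact not_dom_single hm₂ d₁ (dom_mono hdom)
  · by_cases hdv : d₁ = V1
    · subst hdv
      have core : ∀ s₂ : FVert m₁ t m₂, s₂ ∉ ({V2, V1} : Set _) →
          (∀ x : Fin m₂, Hv2 x ≠ s₂ →
            (∀ y : Fin m₂, (Hv2 x : FVert m₁ t m₂) = Hv2 y ∨
              ((FGraph m₁ t m₂).deleteEdges {s(Hv2 a, Hv2 c)}).Adj (Hv2 x) (Hv2 y)) →
            False) → False := by
        intro s₂ hs₂ hH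
        obtain ⟨d₂, hd₂, hdom⟩ := hstrat s₂ hs₂
        simp only [Set.mem_insert_iff, Set.mem_singleton_iff] at hd₂
        push_neg at hd₂
        have hp := (v1_partner hdom).2
        rcases d₂ with (x | x) | (j | i)
        · rcases hp a with heq | hadj
          · simp at heq
          · rcases adj_to_Hv2 (del_adj hadj).1 with h' | ⟨c', h'⟩ <;> simp at h'
        · exact hH x hd₂.2.2 hp
        · rcases hp a with heq | hadj
          · simp at heq
          · rcases adj_to_Hv2 (del_adj hadj).1 with h' | ⟨c', h'⟩ <;> simp at h'
        · fin_cases i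
          · exact hd₂.2.1 rfl
          · exact hd₂.1 rfl
      have htop : c.val < 2 → ∀ x : Fin m₂, x.val < 2 →
          (∀ y : Fin m₂, (Hv2 x : FVert m₁ t m₂) = Hv2 y ∨
            ((FGraph m₁ t m₂).deleteEdges {s(Hv2 a, Hv2 c)}).Adj (Hv2 x) (Hv2 y)) →
          False := by
        intro hcl x hx2 hp
        have hxac : x = a ∨ x = c := by
          have h' : x.val = a.val ∨ x.val = c.val := by omega
          rcases h' with h' | h'
          · exact Or.inl (Fin.ext h')
          · exact Or.inr (Fin.ext h')
        rcases hxac with rfl | rfl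
        · rcases hp c with heq | hadj
          · exact hac (hv2_inj heq)
          · exact (del_adj hadj).2 rfl
        · rcases hp a with heq | hadj
          · exact hac (hv2_inj heq).symm
          · exact (del_adj hadj).2 Sym2.eq_swap
      by_cases hcl : c.val < 2
      · by_cases h3 : 3 ≤ m₂
        · set f2 : Fin m₂ := ⟨2, by omega⟩ with hf2
          have h2v : (f2 : ℕ) = 2 := rfl
          refine core (Hv2 f2) (by rw [mem_pair_iff]; push_neg; constructor <;> simp) ?_
          intro x hxs hp
          by_cases hx2 : x.val < 2
          · exact htop hcl x hx2 hp
          · by_cases hx22 : x.val = 2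
            · exact hxs (congrArg _ (Fin.ext (by omega)))
            · rcases hp f2 with heq | hadj
              · have := congrArg Fin.val (hv2_inj heq)
                omega
              · have h' := adj_Hv2_Hv2 (del_adj hadj).1
                rcases h'.2 with h'' | h'' <;> omega
        · refine core (Bv ⟨0, by omega⟩) (by rw [mem_pair_iff]; push_neg; constructor <;> simp) ?_
          intro x hxs hp
          by_cases hx2 : x.val < 2
          · exact htop hcl x hx2 hp
          · have := x.2
            omega
      · set ot : Fin m₂ := ⟨1 - a.val, by omega⟩ with hot
        have hotv : (ot : ℕ) = 1 - a.val := rfl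
        refine core (Hv2 ot) (by rw [mem_pair_iff]; push_neg; constructor <;> simp) ?_
        intro x hxs hp
        by_cases hx2 : x.val < 2
        · by_cases hxa : x = a
          · subst hxa
            rcases hp c with heq | hadj
            · exact hac (hv2_inj heq)
            · exact (del_adj hadj).2 rfl
          · have hxv : x.val ≠ a.val := fun hh => hxa (Fin.ext hh)
            exact hxs (congrArg _ (Fin.ext (by omega)))
        · by_cases hxc : x = c
          · subst hxc
            rcases hp a with heq | hadj
            · exact hac (hv2_inj heq).symm
            · exact (del_adj hadj).2 Sym2.eq_swap
          · rcases hp c with heq | hadj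
            · exact hxc (hv2_inj heq)
            · have h' := adj_Hv2_Hv2 (del_adj hadj).1
              rcases h'.2 with h'' | h'' <;> omega
    · obtain ⟨d₂, hd₂, hdom⟩ := hstrat V1 (by
        rw [mem_pair_iff]; push_neg
        exact ⟨by simp, fun hh => hdv hh.symm⟩)
      simp only [Set.mem_insert_iff, Set.mem_singleton_iff] at hd₂
      push_neg at hd₂
      exact not_dom_pair hm₁ hm₂ ht ht₀ hdv hd₂.2.2 hd₁ hd₂.1 (dom_mono hdom)

end FPrf

theorem stmt3 (m₁ t m₂ : ℕ) (hm₁ : m₁ = 0 ∨ 2 ≤ m₁) (h₁₂ : m₁ ≤ m₂)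
    (hm₂ : 2 ≤ m₂) (ht : 1 ≤ t) (ht₀ : m₁ = 0 → 2 ≤ t) :
    Critical2 (FGraph m₁ t m₂) := by
  open FPrf in
  refine ⟨⟨wins2 hm₁ hm₂ ht₀, notwins1 hm₂⟩, ?_⟩
  intro u v hadj hw
  rcases u with (a | a) | (j | i) <;> rcases v with (b | b) | (k | i')
  · -- H₁ - H₁
    obtain ⟨hne, htop⟩ := adj_Hv1_Hv1 hadj
    rcases htop with h2 | h2
    · exact refute_E12 hm₁ hm₂ ht ht₀ a b h2 hne hw
    · rw [Sym2.eq_swap] at hw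
      exact refute_E12 hm₁ hm₂ ht ht₀ b a h2 hne.symm hw
  · simp [FGraph, SimpleGraph.fromRel_adj] at hadj
  · simp [FGraph, SimpleGraph.fromRel_adj] at hadj
  · fin_cases i'
    · rw [Sym2.eq_swap] at hw
      exact refute_E3 hm₁ hm₂ ht ht₀ a hw
    · simp [FGraph, SimpleGraph.fromRel_adj] at hadj
  · simp [FGraph, SimpleGraph.fromRel_adj] at hadj
  · -- H₂ - H₂
    obtain ⟨hne, htop⟩ := adj_Hv2_Hv2 hadj
    rcases htop with h2 | h2
    · exact refute_E12' hm₁ hm₂ ht ht₀ a b h2 hne hw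
    · rw [Sym2.eq_swap] at hw
      exact refute_E12' hm₁ hm₂ ht ht₀ b a h2 hne.symm hw
  · simp [FGraph, SimpleGraph.fromRel_adj] at hadj
  · fin_cases i'
    · simp [FGraph, SimpleGraph.fromRel_adj] at hadj
    · rw [Sym2.eq_swap] at hw
      exact refute_E3' hm₁ hm₂ ht ht₀ a hw
  · simp [FGraph, SimpleGraph.fromRel_adj] at hadj
  · simp [FGraph, SimpleGraph.fromRel_adj] at hadj
  · simp [FGraph, SimpleGraph.fromRel_adj] at hadj
  · fin_cases i'
    · rw [Sym2.eq_swap] at hw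
      exact refute_E4 hm₁ hm₂ ht ht₀ j hw
    · rw [Sym2.eq_swap] at hw
      exact refute_E4' hm₁ hm₂ ht ht₀ j hw
  · fin_cases i
    · exact refute_E3 hm₁ hm₂ ht ht₀ b hw
    · simp [FGraph, SimpleGraph.fromRel_adj] at hadj
  · fin_cases i
    · simp [FGraph, SimpleGraph.fromRel_adj] at hadj
    · exact refute_E3' hm₁ hm₂ ht ht₀ b hw
  · fin_cases i
    · exact refute_E4 hm₁ hm₂ ht ht₀ k hw
    · exact refute_E4' hm₁ hm₂ ht ht₀ k hw
  · simp [FGraph, SimpleGraph.fromRel_adj] at hadj
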